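/- Let d ≥ 5 and m ≥ 2, and let G = P_m □ Q_d. For each i ∈ {1,…,m} let M_i be a matching of the i-th canonical copy of Q_d in G, and let M be the union of the M_i. Let u be a vertex of the 1st canonical copy and v a vertex of the m-th canonical copy, of opposite global parity. Assume Conjecture B holds for dimension d. Then there exists a Hamilton path of G between u and v extending M if and only if no sequence of half-layers of G contained in M covers both u and v. -/

import Mathlib

open SimpleGraph

/-- The hypercube graph `Q_n` on binary strings of length `n`:
two strings are adjacent iff they differ in exactly one coordinate. -/
def Qc (n : ℕ) : SimpleGraph (Fin n → Bool) where
  Adj u v := (Finset.univ.filter fun i => u i ≠ v i).card = 1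
  symm := by
    constructor
    intro u v h
    have hset : (Finset.univ.filter fun i => v i ≠ u i)
        = (Finset.univ.filter fun i => u i ≠ v i) :=
      Finset.filter_congr (fun i _ => by simp [ne_comm])
    rw [hset]; exact h
  loopless := by
    constructor
    intro u h
    simp at h

/-- The parity (weight mod 2) of a vertex of the hypercube. -/
def wt {n : ℕ} (u : Fin n → Bool) : ZMod 2 :=
  ((Finset.univ.filter fun i => u i = true).card : ZMod 2)

/-- The neighbor of `u` obtained by flipping coordinate `i`. -/
def flipCoord {n : ℕ} (u : Fin n → Bool) (i : Fin n) : Fin n → Bool :=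
  Function.update u i (!u i)

/-- `M` is a matching of the graph `G`: a set of pairwise non-incident edges of `G`. -/
def IsMatchingOn {V : Type*} (G : SimpleGraph V) (M : Set (Sym2 V)) : Prop :=
  M ⊆ G.edgeSet ∧ ∀ e ∈ M, ∀ f ∈ M, e ≠ f → ∀ v : V, v ∈ e → v ∉ f

/-- A vertex is covered by a set of edges if it is an endpoint of one of them. -/
def coveredBy {V : Type*} (M : Set (Sym2 V)) (v : V) : Prop :=
  ∃ e ∈ M, v ∈ e

/-- There is a Hamilton path of `G` between `u` and `v` whose edge set contains `M`. -/
def ExtendsHamPath {V : Type*} [DecidableEq V] (G : SimpleGraph V) (M : Set (Sym2 V)) (u v : V) : Prop :=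
  ∃ p : G.Walk u v, p.IsHamiltonian ∧ ∀ e ∈ M, e ∈ p.edges

/-- There is a Hamilton cycle of `G` whose edge set contains `M`. -/
def ExtendsHamCycle {V : Type*} [DecidableEq V] (G : SimpleGraph V) (M : Set (Sym2 V)) : Prop :=
  ∃ (a : V) (c : G.Walk a a), c.IsHamiltonianCycle ∧ ∀ e ∈ M, e ∈ c.edges

/-- The set of directions (coordinates where the endpoints differ) of an edge. -/
def edgeDirs {n : ℕ} (e : Sym2 (Fin n → Bool)) : Finset (Fin n) :=
  Sym2.lift ⟨fun u v => Finset.univ.filter fun i => u i ≠ v i, fun u v =>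
    Finset.filter_congr (fun i _ => by simp [ne_comm])⟩ e

/-- The edges of `M` lie in at most `d` distinct directions. -/
def SpansAtMost {n : ℕ} (M : Set (Sym2 (Fin n → Bool))) (d : ℕ) : Prop :=
  ∃ D : Finset (Fin n), D.card ≤ d ∧ ∀ e ∈ M, edgeDirs e ⊆ D

/-- The half-layer in direction `i` of parity `p`: all edges of `Q_n` in direction `i`
whose base (the endpoint with `i`-th coordinate `false`) has parity `p`. -/
def halfLayer (n : ℕ) (i : Fin n) (p : ZMod 2) : Set (Sym2 (Fin n → Bool)) :=
  {e | ∃ u : Fin n → Bool, u i = false ∧ wt u = p ∧ e = s(u, flipCoord u i)}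

/-- Condition C1: `M` contains a half-layer covering both `u` and `v`. -/
def CondC1 {n : ℕ} (M : Set (Sym2 (Fin n → Bool))) (u v : Fin n → Bool) : Prop :=
  ∃ (i : Fin n) (p : ZMod 2), halfLayer n i p ⊆ M ∧
    coveredBy (halfLayer n i p) u ∧ coveredBy (halfLayer n i p) v

/-- Condition C2: `v = u^i`, `M` contains a `u`-avoiding almost half-layer in direction `i`,
and there is `j ≠ i` with `u u^j ∈ M` and `v v^j ∈ M`. -/
def CondC2 {n : ℕ} (M : Set (Sym2 (Fin n → Bool))) (u v : Fin n → Bool) : Prop :=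
  ∃ i : Fin n, v = flipCoord u i ∧
    (∃ (p : ZMod 2) (e₀ : Sym2 (Fin n → Bool)), e₀ ∈ halfLayer n i p ∧ u ∈ e₀ ∧
      halfLayer n i p \ {e₀} ⊆ M) ∧
    ∃ j : Fin n, j ≠ i ∧ s(u, flipCoord u j) ∈ M ∧ s(v, flipCoord v j) ∈ M

/-- Condition C3: `uv ∈ M`. -/
def CondC3 {n : ℕ} (M : Set (Sym2 (Fin n → Bool))) (u v : Fin n → Bool) : Prop :=
  s(u, v) ∈ M

/-- None of the C-conditions holds for `M`, `u`, `v`. -/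
def NoneC {n : ℕ} (M : Set (Sym2 (Fin n → Bool))) (u v : Fin n → Bool) : Prop :=
  ¬ CondC1 M u v ∧ ¬ CondC2 M u v ∧ ¬ CondC3 M u v

/-- Conjecture A for dimension `d`: for every matching `M` of `Q_d` and vertices `u`, `v`
of opposite parity with `u` not covered by `M`, there is a Hamilton path between `u` and `v`
extending `M`. -/
def ConjA (d : ℕ) : Prop :=
  ∀ M : Set (Sym2 (Fin d → Bool)), IsMatchingOn (Qc d) M →
    ∀ u v : Fin d → Bool, wt u ≠ wt v → ¬ coveredBy M u →
      ExtendsHamPath (Qc d) M u v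

/-- Conjecture B for dimension `d`: for every matching `M` of `Q_d` and vertices `u`, `v`
of opposite parity, a Hamilton path between `u` and `v` extending `M` exists iff none of
the C-conditions holds. -/
def ConjB (d : ℕ) : Prop :=
  ∀ M : Set (Sym2 (Fin d → Bool)), IsMatchingOn (Qc d) M →
    ∀ u v : Fin d → Bool, wt u ≠ wt v →
      (ExtendsHamPath (Qc d) M u v ↔ NoneC M u v)

/-- There exist at least two distinct Hamilton paths of `G` between `u` and `v`
extending `M`. -/
def TwoHamPaths {V : Type*} [DecidableEq V] (G : SimpleGraph V) (M : Set (Sym2 V)) (u v : V) : Prop :=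
  ∃ p₁ p₂ : G.Walk u v, p₁.IsHamiltonian ∧ (∀ e ∈ M, e ∈ p₁.edges) ∧
    p₂.IsHamiltonian ∧ (∀ e ∈ M, e ∈ p₂.edges) ∧ p₁ ≠ p₂

/-- Conjecture C for dimension `d`: none of the C-conditions holds iff there exist two
distinct Hamilton paths between `u` and `v` extending `M`. -/
def ConjC (d : ℕ) : Prop :=
  ∀ M : Set (Sym2 (Fin d → Bool)), IsMatchingOn (Qc d) M →
    ∀ u v : Fin d → Bool, wt u ≠ wt v →
      (NoneC M u v ↔ TwoHamPaths (Qc d) M u v)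

/-- The copy of a set of edges of `Q_d` inside the `i`-th canonical copy of `Q_d`
in `P_m □ Q_d`. -/
def liftEdges {m d : ℕ} (i : Fin m) (M : Set (Sym2 (Fin d → Bool))) :
    Set (Sym2 (Fin m × (Fin d → Bool))) :=
  (Sym2.map fun x => (i, x)) '' M

/-- The global parity of a vertex of `P_m □ Q_d`. -/
def gwt {m d : ℕ} (v : Fin m × (Fin d → Bool)) : ZMod 2 :=
  (v.1.val : ZMod 2) + wt v.2

/-- The sequence of half-layers of `P_m □ Q_d` in direction `k` of global parity `p`:
all edges of the canonical copies lying in direction `k` whose base has global parity `p`. -/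
def seqHalfLayer (m d : ℕ) (k : Fin d) (p : ZMod 2) :
    Set (Sym2 (Fin m × (Fin d → Bool))) :=
  {e | ∃ (i : Fin m) (x : Fin d → Bool), x k = false ∧ gwt (i, x) = p ∧
    e = s((i, x), (i, flipCoord x k))}

/-- `M` is a maximal matching of `G`. -/
def IsMaximalMatchingOn {V : Type*} (G : SimpleGraph V) (M : Set (Sym2 V)) : Prop :=
  IsMatchingOn G M ∧ ∀ e : Sym2 V, IsMatchingOn G (insert e M) → e ∈ M

/-- The set `(M \ {uu^M, vv^M}) ∪ {u^M v^M}`, where the removed edges are those of `M`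
incident to `u` or `v`, and the edge `u^M v^M` is present exactly when both `u` and `v`
are covered by `M`. -/
def reducedM {n : ℕ} (M : Set (Sym2 (Fin n → Bool))) (u v : Fin n → Bool) :
    Set (Sym2 (Fin n → Bool)) :=
  {e | e ∈ M ∧ u ∉ e ∧ v ∉ e} ∪
    {f | ∃ a b : Fin n → Bool, s(u, a) ∈ M ∧ s(v, b) ∈ M ∧ f = s(a, b)}

/-- The complete bipartite graph `B(Q_n)` on the vertices of `Q_n`: two vertices are
adjacent iff they have opposite parity. -/
def Bgraph (n : ℕ) : SimpleGraph (Fin n → Bool) where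
  Adj u v := wt u ≠ wt v
  symm := ⟨fun _ _ h => h.symm⟩
  loopless := ⟨fun _ h => h rfl⟩

section Seq8Dev
open Finset

variable {d : ℕ}

lemma flip_self (u : Fin d → Bool) (i : Fin d) : flipCoord u i i = !u i :=
  Function.update_self i _ u

lemma flip_ne' (u : Fin d → Bool) {i j : Fin d} (h : j ≠ i) : flipCoord u i j = u j :=
  Function.update_of_ne h _ u

lemma flipCoord_flip_flip (u : Fin d → Bool) (i : Fin d) : flipCoord (flipCoord u i) i = u := by
  funext j
  by_cases h : j = i
  · subst h; simp [flipCoord]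
  · rw [flip_ne' _ h, flip_ne' _ h]

lemma flip_ne (u : Fin d → Bool) (i : Fin d) : flipCoord u i ≠ u := by
  intro h
  have := congrFun h i
  rw [flip_self] at this
  cases hui : u i <;> simp_all

lemma flip_inj {u : Fin d → Bool} {i j : Fin d} (h : flipCoord u i = flipCoord u j) : i = j := by
  by_contra hij
  have h1 := congrFun h j
  rw [flip_ne' _ (Ne.symm hij), flip_self] at h1
  cases huj : u j <;> simp_all

lemma zmod2_add_self (a : ZMod 2) : a + a = 0 := by
  have : ∀ b : ZMod 2, b + b = 0 := by decide
  exact this a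

lemma zmod2_cases (a : ZMod 2) : a = 0 ∨ a = 1 := by
  revert a; decide

lemma zmod2_ne_iff {a b : ZMod 2} : a ≠ b ↔ a = b + 1 := by
  revert a b; decide

lemma wt_flip (u : Fin d → Bool) (i : Fin d) : wt (flipCoord u i) = wt u + 1 := by
  unfold wt
  cases hui : u i
  · -- u i = false : filter gains i
    have hset : (univ.filter fun j => flipCoord u i j = true)
        = insert i (univ.filter fun j => u j = true) := by
      ext j
      by_cases hj : j = i
      · subst hj; simp [flip_self, hui]
      · simp [flip_ne' _ hj, hj]
    rw [hset, Finset.card_insert_of_notMem (by simp [hui])]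
    push_cast
    ring
  · -- u i = true : filter loses i
    have hset : (univ.filter fun j => u j = true)
        = insert i (univ.filter fun j => flipCoord u i j = true) := by
      ext j
      by_cases hj : j = i
      · subst hj; simp [flip_self, hui]
      · simp [flip_ne' _ hj, hj]
    rw [hset, Finset.card_insert_of_notMem (by simp [flip_self, hui])]
    push_cast
    rw [add_assoc, zmod2_add_self, add_zero]

lemma qc_adj_iff {x y : Fin d → Bool} : (Qc d).Adj x y ↔ ∃ i, y = flipCoord x i := by
  constructor
  · intro h
    have h1 : (univ.filter fun i => x i ≠ y i).card = 1 := h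
    obtain ⟨i, hi⟩ := Finset.card_eq_one.mp h1
    refine ⟨i, funext fun j => ?_⟩
    by_cases hj : j = i
    · subst hj
      have hne : x j ≠ y j := by
        have : j ∈ univ.filter fun i => x i ≠ y i := hi ▸ Finset.mem_singleton_self j
        simpa using this
      rw [flip_self]
      cases hx : x j <;> cases hy : y j <;> simp_all
    · have : j ∉ univ.filter fun i => x i ≠ y i := by
        rw [hi]; simpa using hj
      simp only [Finset.mem_filter, Finset.mem_univ, true_and, not_not] at this
      rw [flip_ne' _ hj, this]
  · rintro ⟨i, rfl⟩
    show (univ.filter fun j => x j ≠ flipCoord x i j).card = 1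
    have : (univ.filter fun j => x j ≠ flipCoord x i j) = {i} := by
      ext j
      by_cases hj : j = i
      · subst hj; simp [flip_self]
      · simp [flip_ne' _ hj, hj]
    rw [this, Finset.card_singleton]

lemma qc_adj_flip (x : Fin d → Bool) (i : Fin d) : (Qc d).Adj x (flipCoord x i) :=
  qc_adj_iff.mpr ⟨i, rfl⟩

/-- `Bool` to `ZMod 2`. -/
def bz (b : Bool) : ZMod 2 := if b then 1 else 0

lemma bz_not (b : Bool) : bz (!b) = bz b + 1 := by cases b <;> decide

/-- `cnum k w = p` iff `w` is covered by the half-layer in direction `k` of parity `p`. -/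
def cnum (k : Fin d) (w : Fin d → Bool) : ZMod 2 := wt w + bz (w k)

lemma cnum_flip_self (k : Fin d) (w : Fin d → Bool) : cnum k (flipCoord w k) = cnum k w := by
  unfold cnum
  rw [wt_flip, flip_self, bz_not]
  have : wt w + 1 + (bz (w k) + 1) = wt w + bz (w k) + (1 + 1) := by ring
  rw [this, show ((1:ZMod 2) + 1) = 0 by decide, add_zero]

lemma cnum_flip_ne {k j : Fin d} (h : j ≠ k) (w : Fin d → Bool) :
    cnum k (flipCoord w j) = cnum k w + 1 := by
  unfold cnum
  rw [wt_flip, flip_ne' _ (Ne.symm h)]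
  ring

end Seq8Dev
section Seq8Dev2
open Finset

variable {d : ℕ}

lemma edge_mem_halfLayer {k : Fin d} {w : Fin d → Bool} {p : ZMod 2} (h : cnum k w = p) :
    s(w, flipCoord w k) ∈ halfLayer d k p := by
  cases hwk : w k
  · exact ⟨w, hwk, by simpa [cnum, bz, hwk] using h, rfl⟩
  · refine ⟨flipCoord w k, by simp [flip_self, hwk], ?_, ?_⟩
    · rw [← cnum_flip_self k w] at h
      have : flipCoord w k k = false := by simp [flip_self, hwk]
      simpa [cnum, bz, this] using h
    · rw [flipCoord_flip_flip, Sym2.eq_swap]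

lemma mem_of_mem_halfLayer {e : Sym2 (Fin d → Bool)} {k : Fin d} {p : ZMod 2}
    {w : Fin d → Bool} (he : e ∈ halfLayer d k p) (hw : w ∈ e) :
    cnum k w = p ∧ e = s(w, flipCoord w k) := by
  obtain ⟨x, hxk, hwx, rfl⟩ := he
  rcases Sym2.mem_iff.mp hw with rfl | rfl
  · exact ⟨by simp [cnum, bz, hxk, hwx], rfl⟩
  · constructor
    · rw [cnum_flip_self, ← hwx]; simp [cnum, bz, hxk]
    · rw [flipCoord_flip_flip, Sym2.eq_swap]

lemma covered_halfLayer_iff {k : Fin d} {p : ZMod 2} {w : Fin d → Bool} :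
    coveredBy (halfLayer d k p) w ↔ cnum k w = p := by
  constructor
  · rintro ⟨e, he, hwe⟩
    exact (mem_of_mem_halfLayer he hwe).1
  · intro h
    exact ⟨_, edge_mem_halfLayer h, Sym2.mem_mk_left _ _⟩

lemma matching_unique {V : Type*} {G : SimpleGraph V} {M : Set (Sym2 V)}
    (hM : IsMatchingOn G M) {a b c : V} (h1 : s(a, b) ∈ M) (h2 : s(a, c) ∈ M) : b = c := by
  by_cases he : s(a, b) = s(a, c)
  · rcases Sym2.eq_iff.mp he with ⟨-, h⟩ | ⟨h1', h2'⟩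
    · exact h
    · rw [← h1', h2']
  · exact absurd (Sym2.mem_mk_left a c) (hM.2 _ h1 _ h2 he a (Sym2.mem_mk_left a b))

/-- `M` contains an almost half-layer (possibly a full half-layer) in direction `k`. -/
def AlmostIn (M : Set (Sym2 (Fin d → Bool))) (k : Fin d) : Prop :=
  ∃ (p : ZMod 2) (e₀ : Sym2 (Fin d → Bool)),
    e₀ ∈ halfLayer d k p ∧ halfLayer d k p \ {e₀} ⊆ M

/-- The vertex of the cube given by the indicator of a finset of coordinates. -/
def vOf (S : Finset (Fin d)) : Fin d → Bool := fun t => decide (t ∈ S)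

lemma vOf_apply {S : Finset (Fin d)} {t : Fin d} : vOf S t = true ↔ t ∈ S := by
  simp [vOf]

lemma wt_vOf (S : Finset (Fin d)) : wt (vOf S) = (S.card : ZMod 2) := by
  unfold wt
  have : (univ.filter fun j => vOf S j = true) = S := by
    ext j; simp [vOf]
  rw [this]

lemma vOf_injective {S T : Finset (Fin d)} (h : vOf S = vOf T) : S = T := by
  ext j
  rw [← vOf_apply, ← vOf_apply, h]

end Seq8Dev2
section Seq8Dev3
open Finset

variable {d : ℕ}

lemma cands_exists (A : Finset (Fin d)) (t : ZMod 2) (n : ℕ) (hn : n = 3 ∨ n = 5)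
    (hA : (if n = 3 then 3 else 4) ≤ A.card) :
    ∃ CANDS : Finset (Finset (Fin d)), n ≤ CANDS.card ∧
      ∀ T ∈ CANDS, T ⊆ A ∧ (T.card : ZMod 2) = t := by
  rcases zmod2_cases t with rfl | rfl
  · -- t = 0 : use 2-element subsets
    refine ⟨A.powersetCard 2, ?_, fun T hT => ?_⟩
    · rw [card_powersetCard]
      rcases hn with rfl | rfl
      · simp only [if_pos rfl] at hA
        calc (3:ℕ) = Nat.choose 3 2 := by decide
        _ ≤ Nat.choose A.card 2 := Nat.choose_le_choose 2 hA
      · norm_num at hA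
        calc (5:ℕ) ≤ Nat.choose 4 2 := by decide
        _ ≤ Nat.choose A.card 2 := Nat.choose_le_choose 2 hA
    · rw [mem_powersetCard] at hT
      exact ⟨hT.1, by rw [hT.2]; decide⟩
  · -- t = 1 : use 1- and 3-element subsets
    refine ⟨A.powersetCard 1 ∪ A.powersetCard 3, ?_, fun T hT => ?_⟩
    · have hdisj : Disjoint (A.powersetCard 1) (A.powersetCard 3) := by
        rw [Finset.disjoint_left]
        intro T h1 h3
        rw [mem_powersetCard] at h1 h3
        omega
      rw [card_union_of_disjoint hdisj, card_powersetCard, card_powersetCard]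
      rcases hn with rfl | rfl
      · simp only [if_pos rfl] at hA
        have : (3:ℕ) ≤ Nat.choose A.card 1 := by
          calc (3:ℕ) = Nat.choose 3 1 := by decide
          _ ≤ Nat.choose A.card 1 := Nat.choose_le_choose 1 hA
        omega
      · norm_num at hA
        have h1 : (4:ℕ) ≤ Nat.choose A.card 1 := by
          calc (4:ℕ) = Nat.choose 4 1 := by decide
          _ ≤ Nat.choose A.card 1 := Nat.choose_le_choose 1 hA
        have h3 : (4:ℕ) ≤ Nat.choose A.card 3 := by
          calc (4:ℕ) = Nat.choose 4 3 := by decide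
          _ ≤ Nat.choose A.card 3 := Nat.choose_le_choose 3 hA
        omega
    · rw [Finset.mem_union, mem_powersetCard, mem_powersetCard] at hT
      rcases hT with ⟨hs, hc⟩ | ⟨hs, hc⟩ <;> exact ⟨hs, by rw [hc]; decide⟩

lemma exists_good_vertex (n : ℕ) (hn : n = 3 ∨ n = 5) (K C : Finset (Fin d)) (hCK : C ⊆ K)
    (hKd : K.card + (if n = 3 then 3 else 4) ≤ d) (r : ZMod 2)
    (bad : Finset (Fin d → Bool)) (hbad : bad.card < n) :
    ∃ x : Fin d → Bool, (∀ j ∈ K, (x j = true ↔ j ∈ C)) ∧ wt x = r ∧ x ∉ bad := by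
  set A : Finset (Fin d) := Kᶜ with hAdef
  have hAcard : (if n = 3 then 3 else 4) ≤ A.card := by
    have : A.card = d - K.card := by
      rw [hAdef, Finset.card_compl, Fintype.card_fin]
    omega
  obtain ⟨CANDS, hCc, hCm⟩ := cands_exists A (r - (C.card : ZMod 2)) n hn hAcard
  -- map T ↦ vOf (C ∪ T) is injective on CANDS
  have hinj : Set.InjOn (fun T => vOf (C ∪ T)) CANDS := by
    intro T1 h1 T2 h2 h
    have hv := vOf_injective h
    have hsub1 := (hCm T1 h1).1
    have hsub2 := (hCm T2 h2).1
    ext j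
    constructor
    · intro hj
      have : j ∈ C ∪ T2 := hv ▸ (Finset.mem_union_right _ hj)
      rcases Finset.mem_union.mp this with hc | ht
      · exact absurd (Finset.mem_compl.mp (hsub1 hj)) (by simp [hCK hc])
      · exact ht
    · intro hj
      have : j ∈ C ∪ T1 := hv ▸ (Finset.mem_union_right _ hj)
      rcases Finset.mem_union.mp this with hc | ht
      · exact absurd (Finset.mem_compl.mp (hsub2 hj)) (by simp [hCK hc])
      · exact ht
  have himg : n ≤ (CANDS.image fun T => vOf (C ∪ T)).card := by
    rw [Finset.card_image_of_injOn hinj]; exact hCc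
  have hns : ¬ (CANDS.image fun T => vOf (C ∪ T)) ⊆ bad := by
    intro hsub
    have := Finset.card_le_card hsub
    omega
  obtain ⟨x, hximg, hxbad⟩ := Finset.not_subset.mp hns
  obtain ⟨T, hT, rfl⟩ := Finset.mem_image.mp hximg
  obtain ⟨hTA, hTpar⟩ := hCm T hT
  have hTC : ∀ j ∈ T, j ∉ C := fun j hj hc =>
    (Finset.mem_compl.mp (hTA hj)) (hCK hc)
  refine ⟨vOf (C ∪ T), fun j hj => ?_, ?_, hxbad⟩
  · rw [vOf_apply, Finset.mem_union]
    constructor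
    · rintro (hc | ht)
      · exact hc
      · exact absurd hj (Finset.mem_compl.mp (hTA ht))
    · exact Or.inl
  · rw [wt_vOf, Finset.card_union_of_disjoint (Finset.disjoint_right.mpr hTC)]
    push_cast
    rw [hTpar]
    ring

/-- Helper: the boolean with the given `ZMod 2` value. -/
def bOf (t : ZMod 2) : Bool := decide (t = 1)

lemma bz_bOf (t : ZMod 2) : bz (bOf t) = t := by
  rcases zmod2_cases t with rfl | rfl <;> decide

lemma exists_vertex2 (hd : 5 ≤ d) {k k' : Fin d} (hkk' : k ≠ k') (b b' : Bool) (r : ZMod 2)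
    (bad : Finset (Fin d → Bool)) (hbad : bad.card ≤ 2) :
    ∃ x : Fin d → Bool, x k = b ∧ x k' = b' ∧ wt x = r ∧ x ∉ bad := by
  set C : Finset (Fin d) := (if b then {k} else ∅) ∪ (if b' then {k'} else ∅) with hC
  have hCK : C ⊆ ({k, k'} : Finset (Fin d)) := by
    intro j hj
    rw [hC] at hj
    rcases Finset.mem_union.mp hj with h | h
    · cases b
      · simp at h
      · rw [if_pos rfl, Finset.mem_singleton] at h
        simp [h]
    · cases b'
      · simp at h
      · rw [if_pos rfl, Finset.mem_singleton] at h
        simp [h]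
  have hcard : ({k, k'} : Finset (Fin d)).card = 2 := Finset.card_pair hkk'
  obtain ⟨x, hx, hwt, hbad'⟩ := exists_good_vertex 3 (Or.inl rfl) {k, k'} C hCK
    (by rw [hcard]; simpa using hd) r bad (by omega)
  have hkC : k ∈ C ↔ b = true := by
    rw [hC]; cases b <;> cases b' <;> simp [Finset.mem_union, hkk', (Ne.symm hkk')]
  have hk'C : k' ∈ C ↔ b' = true := by
    rw [hC]; cases b <;> cases b' <;> simp [Finset.mem_union, hkk', (Ne.symm hkk')]
  refine ⟨x, ?_, ?_, hwt, hbad'⟩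
  · have := (hx k (by simp)).trans hkC
    cases hb : x k <;> cases b <;> simp_all
  · have := (hx k' (by simp)).trans hk'C
    cases hb : x k' <;> cases b' <;> simp_all

lemma exists_vertex1 (hd : 5 ≤ d) (k : Fin d) (b : Bool) (r : ZMod 2)
    (bad : Finset (Fin d → Bool)) (hbad : bad.card ≤ 4) :
    ∃ x : Fin d → Bool, x k = b ∧ wt x = r ∧ x ∉ bad := by
  set C : Finset (Fin d) := (if b then {k} else ∅) with hC
  have hCK : C ⊆ ({k} : Finset (Fin d)) := by
    intro j hj
    rw [hC] at hj
    cases b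
    · simp at hj
    · simp at hj; simp [hj]
  obtain ⟨x, hx, hwt, hbad'⟩ := exists_good_vertex 5 (Or.inr rfl) {k} C hCK
    (by simpa using hd) r bad (by omega)
  have hkC : k ∈ C ↔ b = true := by rw [hC]; cases b <;> simp
  refine ⟨x, ?_, hwt, hbad'⟩
  have := (hx k (by simp)).trans hkC
  cases hb : x k <;> cases b <;> simp_all

end Seq8Dev3
section Seq8Dev4
open Finset

variable {d : ℕ} {M : Set (Sym2 (Fin d → Bool))}

lemma halfLayer_rep {e : Sym2 (Fin d → Bool)} {k : Fin d} {p : ZMod 2}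
    (he : e ∈ halfLayer d k p) :
    ∃ y, y k = false ∧ wt y = p ∧ e = s(y, flipCoord y k) := he

lemma sym2_ne_of_mem_ne {x : Fin d → Bool} {k k' : Fin d} (h : k ≠ k') :
    s(x, flipCoord x k) ≠ s(x, flipCoord x k') := by
  intro he
  rcases Sym2.eq_iff.mp he with ⟨-, hf⟩ | ⟨h1, h2⟩
  · exact h (flip_inj hf)
  · exact flip_ne x k' h1.symm

lemma almostIn_unique (hd : 5 ≤ d) (hM : IsMatchingOn (Qc d) M) {k k' : Fin d}
    (h1 : AlmostIn M k) (h2 : AlmostIn M k') : k = k' := by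
  by_contra hkk
  obtain ⟨p, e₀, he₀, hsub⟩ := h1
  obtain ⟨p', e₁, he₁, hsub'⟩ := h2
  obtain ⟨y₀, hy₀k, hy₀w, he₀e⟩ := halfLayer_rep he₀
  obtain ⟨y₁, hy₁k, hy₁w, he₁e⟩ := halfLayer_rep he₁
  set b' : Bool := bOf (p' - p) with hb'
  set z : Fin d → Bool := if b' then flipCoord y₁ k' else y₁ with hz
  obtain ⟨x, hxk, hxk', hxw, hxbad⟩ := exists_vertex2 hd hkk false b' p
    ({y₀, z} : Finset (Fin d → Bool)) ((Finset.card_insert_le _ _).trans (by simp))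
  have hxy₀ : x ∉ ({y₀, z} : Finset _) := hxbad
  have hcnumk : cnum k x = p := by simp [cnum, hxk, bz, hxw]
  have hcnumk' : cnum k' x = p' := by
    rw [cnum, hxw, hxk', hb', bz_bOf]
    ring
  have hE : s(x, flipCoord x k) ∈ M := by
    apply hsub
    refine ⟨edge_mem_halfLayer hcnumk, ?_⟩
    intro hmem
    rw [Set.mem_singleton_iff] at hmem
    have hx0 : x ∈ e₀ := hmem ▸ Sym2.mem_mk_left _ _
    rw [he₀e] at hx0
    rcases Sym2.mem_iff.mp hx0 with hx | hx
    · exact hxy₀ (hx ▸ Finset.mem_insert_self _ _)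
    · have : x k = true := by rw [hx, flip_self, hy₀k]; rfl
      rw [hxk] at this; exact absurd this (by simp)
  have hE' : s(x, flipCoord x k') ∈ M := by
    apply hsub'
    refine ⟨edge_mem_halfLayer hcnumk', ?_⟩
    intro hmem
    rw [Set.mem_singleton_iff] at hmem
    have hx1 : x ∈ e₁ := hmem ▸ Sym2.mem_mk_left _ _
    rw [he₁e] at hx1
    have hxz : x = z := by
      rcases Sym2.mem_iff.mp hx1 with hx | hx
      · have hb'f : b' = false := by rw [← hxk', hx, hy₁k]
        rw [hz, hb'f, if_neg (by simp), ← hx]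
      · have hb't : b' = true := by rw [← hxk', hx, flip_self, hy₁k]; rfl
        rw [hz, hb't, if_pos rfl, ← hx]
    exact hxy₀ (Finset.mem_insert_of_mem (Finset.mem_singleton.mpr hxz))
  exact (hM.2 _ hE _ hE' (sym2_ne_of_mem_ne hkk) x (Sym2.mem_mk_left _ _))
    (Sym2.mem_mk_left _ _) |>.elim

lemma full_almostIn (hd : 5 ≤ d) {k : Fin d} {p : ZMod 2} (h : halfLayer d k p ⊆ M) :
    AlmostIn M k := by
  obtain ⟨y, hyk, hyw, -⟩ := exists_vertex1 hd k false p ∅ (by simp)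
  exact ⟨p, s(y, flipCoord y k), ⟨y, hyk, hyw, rfl⟩, fun e he => h he.1⟩

lemma covering_layer_unique (hd : 5 ≤ d) (hM : IsMatchingOn (Qc d) M) {a : Fin d → Bool}
    {k k' : Fin d} (h1 : halfLayer d k (cnum k a) ⊆ M) (h2 : halfLayer d k' (cnum k' a) ⊆ M) :
    k = k' :=
  almostIn_unique hd hM (full_almostIn hd h1) (full_almostIn hd h2)

lemma noneC_pair (hM : IsMatchingOn (Qc d) M) {a b : Fin d → Bool}
    (hC1 : ∀ k, halfLayer d k (cnum k a) ⊆ M → cnum k b ≠ cnum k a)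
    (hC2 : ∀ k, AlmostIn M k → b ≠ flipCoord a k)
    (hC3 : ∀ w, s(a, w) ∈ M → b ≠ w) :
    NoneC M a b ∧ NoneC M b a := by
  have nc1 : ¬ CondC1 M a b := by
    rintro ⟨i, p, hsub, hca, hcb⟩
    rw [covered_halfLayer_iff] at hca hcb
    exact hC1 i (hca ▸ hsub) (by rw [hca, hcb])
  have nc1' : ¬ CondC1 M b a := by
    rintro ⟨i, p, hsub, hcb, hca⟩
    rw [covered_halfLayer_iff] at hca hcb
    exact hC1 i (hca ▸ hsub) (by rw [hca, hcb])
  have nc3 : ¬ CondC3 M a b := fun h => hC3 b h rfl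
  refine ⟨⟨nc1, ?_, nc3⟩, ⟨nc1', ?_, ?_⟩⟩
  · rintro ⟨i, hvb, ⟨p, e₀, he₀, -, hsub⟩, -⟩
    exact hC2 i ⟨p, e₀, he₀, hsub⟩ hvb
  · rintro ⟨i, hva, ⟨p, e₀, he₀, -, hsub⟩, -⟩
    refine hC2 i ⟨p, e₀, he₀, hsub⟩ ?_
    rw [hva, flipCoord_flip_flip]
  · intro h
    have h' : s(a, b) ∈ M := by
      have : s(b, a) ∈ M := h
      rwa [Sym2.eq_swap] at this
    exact hC3 b h' rfl

open Classical in
/-- The vertices (at most 2) blocked by conditions C2 and C3 relative to anchor `a`. -/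
noncomputable def badFree (M : Set (Sym2 (Fin d → Bool))) (a : Fin d → Bool) :
    Finset (Fin d → Bool) :=
  (if h : ∃ k, AlmostIn M k then {flipCoord a h.choose} else ∅) ∪
    (if h : ∃ w, s(a, w) ∈ M then {h.choose} else ∅)

lemma badFree_card (M : Set (Sym2 (Fin d → Bool))) (a : Fin d → Bool) :
    (badFree M a).card ≤ 2 := by
  refine (Finset.card_union_le _ _).trans ?_
  have h1 : ∀ (P : Prop) (h : Decidable P) (f : P → Fin d → Bool),
      (if h' : P then ({f h'} : Finset (Fin d → Bool)) else ∅).card ≤ 1 := by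
    intro P h f
    split <;> simp
  calc _ ≤ 1 + 1 := Nat.add_le_add (h1 _ _ _) (h1 _ _ _)
  _ = 2 := rfl

lemma badFree_works (hd : 5 ≤ d) (hM : IsMatchingOn (Qc d) M) {a b : Fin d → Bool}
    (hb : b ∉ badFree M a) :
    (∀ k, AlmostIn M k → b ≠ flipCoord a k) ∧ (∀ w, s(a, w) ∈ M → b ≠ w) := by
  constructor
  · intro k hk heq
    have h : ∃ k, AlmostIn M k := ⟨k, hk⟩
    have hkc : k = h.choose := almostIn_unique hd hM hk h.choose_spec
    apply hb
    rw [badFree, Finset.mem_union]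
    left
    rw [dif_pos h, Finset.mem_singleton, heq, hkc]
  · intro w hw heq
    have h : ∃ w, s(a, w) ∈ M := ⟨w, hw⟩
    have hwc : w = h.choose := matching_unique hM hw h.choose_spec
    apply hb
    rw [badFree, Finset.mem_union]
    right
    rw [dif_pos h, Finset.mem_singleton, heq, hwc]

end Seq8Dev4
section Seq8Dev5
open Finset

variable {d m : ℕ}

lemma zmod2_cancel (a b : ZMod 2) : a + b + a = b := by
  rw [add_comm a b, add_assoc, zmod2_add_self, add_zero]

lemma big_adj {w z : Fin m × (Fin d → Bool)} :
    (SimpleGraph.pathGraph m □ Qc d).Adj w z ↔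
      ((SimpleGraph.pathGraph m).Adj w.1 z.1 ∧ w.2 = z.2) ∨
        ((Qc d).Adj w.2 z.2 ∧ w.1 = z.1) :=
  SimpleGraph.boxProd_adj

lemma natcast_pathAdj {i j : Fin m} (h : (SimpleGraph.pathGraph m).Adj i j) :
    (j.val : ZMod 2) = (i.val : ZMod 2) + 1 := by
  rcases SimpleGraph.pathGraph_adj.mp h with h | h
  · rw [← h]; push_cast; ring
  · rw [← h]; push_cast
    rw [add_assoc, zmod2_add_self, add_zero]

/-- The global covering number: `gcnum k w = p` iff `w` is covered by the sequence of
half-layers in direction `k` of parity `p`. -/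
def gcnum (k : Fin d) (w : Fin m × (Fin d → Bool)) : ZMod 2 :=
  (w.1.val : ZMod 2) + cnum k w.2

lemma gcnum_eq_gwt (k : Fin d) (w : Fin m × (Fin d → Bool)) :
    gcnum k w = gwt w + bz (w.2 k) := by
  unfold gcnum gwt cnum
  ring

lemma gwt_adj {w z : Fin m × (Fin d → Bool)}
    (h : (SimpleGraph.pathGraph m □ Qc d).Adj w z) : gwt z = gwt w + 1 := by
  rcases big_adj.mp h with ⟨hp, he⟩ | ⟨hq, he⟩
  · unfold gwt
    rw [natcast_pathAdj hp, ← he]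
    ring
  · obtain ⟨i, hi⟩ := qc_adj_iff.mp hq
    unfold gwt
    rw [hi, wt_flip, ← he]
    ring

lemma gcnum_adj {k : Fin d} {w z : Fin m × (Fin d → Bool)}
    (h : (SimpleGraph.pathGraph m □ Qc d).Adj w z)
    (hne : z ≠ (w.1, flipCoord w.2 k)) :
    z.2 k = w.2 k ∧ gcnum k z = gcnum k w + 1 := by
  rcases big_adj.mp h with ⟨hp, he⟩ | ⟨hq, he⟩
  · refine ⟨by rw [← he], ?_⟩
    unfold gcnum
    rw [natcast_pathAdj hp, ← he]
    ring
  · obtain ⟨i, hi⟩ := qc_adj_iff.mp hq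
    have hik : i ≠ k := by
      rintro rfl
      exact hne (Prod.ext he.symm hi)
    constructor
    · rw [hi, flip_ne' _ (Ne.symm hik)]
    · unfold gcnum
      rw [hi, cnum_flip_ne (Ne.symm (Ne.symm hik)), ← he]
      ring

lemma seq_edge_mem {k : Fin d} {p : ZMod 2} {w : Fin m × (Fin d → Bool)}
    (h : gcnum k w = p) :
    s(w, (w.1, flipCoord w.2 k)) ∈ seqHalfLayer m d k p := by
  obtain ⟨i, x⟩ := w
  cases hxk : x k
  · exact ⟨i, x, hxk, by simpa [gwt, gcnum, cnum, bz, hxk] using h, rfl⟩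
  · refine ⟨i, flipCoord x k, by simp [flip_self, hxk], ?_, ?_⟩
    · have : gcnum k (i, flipCoord x k) = p := by
        unfold gcnum
        rw [cnum_flip_self]
        exact h
      have h2 : flipCoord x k k = false := by simp [flip_self, hxk]
      simpa [gwt, gcnum, cnum, bz, h2] using this
    · rw [flipCoord_flip_flip, Sym2.eq_swap]

lemma mem_of_mem_seq {k : Fin d} {p : ZMod 2} {e : Sym2 (Fin m × (Fin d → Bool))}
    (he : e ∈ seqHalfLayer m d k p) {w : Fin m × (Fin d → Bool)} (hw : w ∈ e) :
    gcnum k w = p ∧ e = s(w, (w.1, flipCoord w.2 k)) := by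
  obtain ⟨i, x, hxk, hgwt, rfl⟩ := he
  rcases Sym2.mem_iff.mp hw with rfl | rfl
  · exact ⟨by simpa [gwt, gcnum, cnum, bz, hxk] using hgwt, rfl⟩
  · constructor
    · have : gcnum k (i, x) = p := by simpa [gwt, gcnum, cnum, bz, hxk] using hgwt
      rw [← this]
      unfold gcnum
      rw [cnum_flip_self]
    · rw [flipCoord_flip_flip, Sym2.eq_swap]

lemma covered_seq_iff {k : Fin d} {p : ZMod 2} {w : Fin m × (Fin d → Bool)} :
    coveredBy (seqHalfLayer m d k p) w ↔ gcnum k w = p := by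
  constructor
  · rintro ⟨e, he, hwe⟩
    exact (mem_of_mem_seq he hwe).1
  · intro h
    exact ⟨_, seq_edge_mem h, Sym2.mem_mk_left _ _⟩

lemma seq_sub_iff {k : Fin d} {p : ZMod 2} (Ms : Fin m → Set (Sym2 (Fin d → Bool))) :
    seqHalfLayer m d k p ⊆ (⋃ i, liftEdges i (Ms i)) ↔
      ∀ i : Fin m, halfLayer d k (p + (i.val : ZMod 2)) ⊆ Ms i := by
  constructor
  · intro hsub i e he
    obtain ⟨x, hxk, hxw, rfl⟩ := halfLayer_rep he
    have hE : s((i, x), (i, flipCoord x k)) ∈ seqHalfLayer m d k p := by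
      refine ⟨i, x, hxk, ?_, rfl⟩
      show (i.val : ZMod 2) + wt x = p
      rw [hxw, ← add_assoc, add_comm ((i.val : ZMod 2)) p, add_assoc, zmod2_add_self, add_zero]
    have := hsub hE
    rw [Set.mem_iUnion] at this
    obtain ⟨j, f, hf, hfe⟩ := this
    induction f using Sym2.ind with
    | _ y z =>
      rw [Sym2.map_pair_eq] at hfe
      rcases Sym2.eq_iff.mp hfe with ⟨h1, h2⟩ | ⟨h1, h2⟩
      · have hji : j = i := congrArg Prod.fst h1
        have hy : y = x := congrArg Prod.snd h1
        have hz : z = flipCoord x k := congrArg Prod.snd h2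
        subst hji
        rw [hy, hz] at hf
        exact hf
      · have hji : j = i := congrArg Prod.fst h1
        have hy : y = flipCoord x k := congrArg Prod.snd h1
        have hz : z = x := congrArg Prod.snd h2
        subst hji
        rw [hy, hz, Sym2.eq_swap] at hf
        exact hf
  · intro h e he
    obtain ⟨i, x, hxk, hgwt, rfl⟩ := he
    have hwx : wt x = p + (i.val : ZMod 2) := by
      have : (i.val : ZMod 2) + wt x = p := hgwt
      rw [← this, add_comm ((i.val : ZMod 2)) (wt x), add_assoc, zmod2_add_self, add_zero]
    have hmem : s(x, flipCoord x k) ∈ Ms i := h i ⟨x, hxk, hwx, rfl⟩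
    rw [Set.mem_iUnion]
    exact ⟨i, s(x, flipCoord x k), hmem, by rw [Sym2.map_pair_eq]⟩

/-- Embedding of `Q_d` as the `i`-th canonical copy. -/
@[reducible] def homCopy (m d : ℕ) (i : Fin m) : Qc d →g (SimpleGraph.pathGraph m □ Qc d) where
  toFun := fun x => (i, x)
  map_rel' := fun h => Or.inr ⟨h, rfl⟩

lemma homCopy_injective (m d : ℕ) (i : Fin m) : Function.Injective (homCopy m d i) :=
  fun x y h => congrArg Prod.snd h

/-- Embedding of the first `m` copies into `P_n □ Q_d` for `m ≤ n`. -/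
@[reducible] def homCast (d : ℕ) {m n : ℕ} (h : m ≤ n) :
    (SimpleGraph.pathGraph m □ Qc d) →g (SimpleGraph.pathGraph n □ Qc d) where
  toFun := fun w => (Fin.castLE h w.1, w.2)
  map_rel' := by
    intro a b hab
    rcases big_adj.mp hab with ⟨hp, he⟩ | ⟨hq, he⟩
    · refine Or.inl ⟨?_, he⟩
      rw [SimpleGraph.pathGraph_adj]
      rcases SimpleGraph.pathGraph_adj.mp hp with h' | h' <;> simp [Fin.castLE] <;> omega
    · refine Or.inr ⟨hq, ?_⟩
      show Fin.castLE h a.1 = Fin.castLE h b.1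
      rw [he]

lemma homCast_injective (d : ℕ) {m n : ℕ} (h : m ≤ n) :
    Function.Injective (homCast d h) := by
  intro a b hab
  have hab' : (Fin.castLE h a.1, a.2) = (Fin.castLE h b.1, b.2) := hab
  obtain ⟨h1, h2⟩ := Prod.ext_iff.mp hab'
  exact Prod.ext (Fin.castLE_injective h h1) h2

end Seq8Dev5
section Seq8Dev6
open SimpleGraph Walk

variable {V : Type*} [DecidableEq V] {G : SimpleGraph V}

/-- The number of edges of a walk incident to `w`. -/
def incCount {u v : V} (p : G.Walk u v) (w : V) : ℕ :=
  p.edges.countP (fun e => decide (w ∈ e))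

lemma incCount_zero_of_not_mem {u v w : V} (p : G.Walk u v) (hw : w ∉ p.support) :
    incCount p w = 0 := by
  rw [incCount, List.countP_eq_zero]
  intro e he
  simp only [decide_eq_true_eq]
  intro hwe
  obtain ⟨y, rfl⟩ := Sym2.mem_iff_exists.mp hwe
  exact hw (p.fst_mem_support_of_mem_edges he)

lemma incCount_start_le_one {u v : V} (p : G.Walk u v) (hp : p.IsPath) :
    incCount p u ≤ 1 := by
  cases p with
  | nil => simp [incCount]
  | @cons a b c h q =>
    rw [Walk.cons_isPath_iff] at hp
    rw [incCount, Walk.edges_cons, List.countP_cons]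
    have h0 : incCount q u = 0 := incCount_zero_of_not_mem q hp.2
    rw [incCount] at h0
    have hm : u ∈ s(u, b) := Sym2.mem_mk_left _ _
    simp only [hm, decide_true]
    simp only [if_true]
    omega

lemma incCount_le_two {u v : V} (p : G.Walk u v) (hp : p.IsPath) (w : V) :
    incCount p w ≤ 2 := by
  induction p with
  | nil => simp [incCount]
  | @cons a b c h q ih =>
    rw [Walk.cons_isPath_iff] at hp
    rw [incCount, Walk.edges_cons, List.countP_cons]
    by_cases hw : w = a
    · subst hw
      have h0 : incCount q w = 0 := incCount_zero_of_not_mem q hp.2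
      rw [incCount] at h0
      split <;> omega
    · by_cases hwb : w = b
      · subst hwb
        have h1 : incCount q w ≤ 1 := incCount_start_le_one q hp.1
        rw [incCount] at h1
        split <;> omega
      · have h2 : incCount q w ≤ 2 := ih hp.1
        rw [incCount] at h2
        have hnm : ¬ (w ∈ s(a, b)) := by
          rw [Sym2.mem_iff]
          push_neg
          exact ⟨hw, hwb⟩
        simp only [hnm, decide_false]
        simp
        omega

lemma exists_two_incident {u v : V} (p : G.Walk u v) (hp : p.IsPath) (w : V)
    (hmem : w ∈ p.support) (hu : w ≠ u) (hv : w ≠ v) :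
    ∃ e₁ e₂, e₁ ∈ p.edges ∧ e₂ ∈ p.edges ∧ e₁ ≠ e₂ ∧ w ∈ e₁ ∧ w ∈ e₂ := by
  induction p with
  | nil =>
    simp only [Walk.support_nil, List.mem_singleton] at hmem
    exact absurd hmem hu
  | @cons a b c h q ih =>
    rw [Walk.support_cons, List.mem_cons] at hmem
    rcases hmem with rfl | hmem
    · exact absurd rfl hu
    by_cases hwb : w = b
    · subst hwb
      cases q with
      | nil => exact absurd rfl hv
      | @cons b' b2 c' h2 r =>
        refine ⟨s(a, w), s(w, b2), by simp, by simp, ?_, by simp, by simp⟩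
        intro he
        rcases Sym2.eq_iff.mp he with ⟨h1, h2'⟩ | ⟨h1, h2'⟩
        · exact G.loopless.irrefl w (h1 ▸ h)
        · rw [Walk.cons_isPath_iff] at hp
          apply hp.2
          rw [h1, Walk.support_cons]
          exact List.mem_cons_of_mem _ r.start_mem_support
    · rw [Walk.cons_isPath_iff] at hp
      obtain ⟨e₁, e₂, h1, h2, hne, hw1, hw2⟩ := ih hp.1 hmem hwb hv
      exact ⟨e₁, e₂, by simp [h1], by simp [h2], hne, hw1, hw2⟩

lemma incCount_ge_two {u v : V} (p : G.Walk u v) (hp : p.IsPath)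
    {e₁ e₂ : Sym2 V} {w : V} (h1 : e₁ ∈ p.edges) (h2 : e₂ ∈ p.edges) (hne : e₁ ≠ e₂)
    (hw1 : w ∈ e₁) (hw2 : w ∈ e₂) : 2 ≤ incCount p w := by
  have hsub : ({e₁, e₂} : Finset (Sym2 V)) ⊆
      (p.edges.filter (fun e => decide (w ∈ e))).toFinset := by
    intro x hx
    rcases Finset.mem_insert.mp hx with rfl | hx
    · rw [List.mem_toFinset]
      exact List.mem_filter.mpr ⟨h1, by simpa using hw1⟩
    · rw [Finset.mem_singleton] at hx
      subst hx
      rw [List.mem_toFinset]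
      exact List.mem_filter.mpr ⟨h2, by simpa using hw2⟩
  calc 2 = ({e₁, e₂} : Finset (Sym2 V)).card := (Finset.card_pair hne).symm
  _ ≤ (p.edges.filter (fun e => decide (w ∈ e))).toFinset.card := Finset.card_le_card hsub
  _ ≤ (p.edges.filter (fun e => decide (w ∈ e))).length := List.toFinset_card_le _
  _ = incCount p w := List.countP_eq_length_filter.symm

lemma incCount_ge_three {u v : V} (p : G.Walk u v)
    {e₁ e₂ e₃ : Sym2 V} {w : V} (h1 : e₁ ∈ p.edges) (h2 : e₂ ∈ p.edges) (h3 : e₃ ∈ p.edges)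
    (h12 : e₁ ≠ e₂) (h13 : e₁ ≠ e₃) (h23 : e₂ ≠ e₃)
    (hw1 : w ∈ e₁) (hw2 : w ∈ e₂) (hw3 : w ∈ e₃) : 3 ≤ incCount p w := by
  have hsub : ({e₁, e₂, e₃} : Finset (Sym2 V)) ⊆
      (p.edges.filter (fun e => decide (w ∈ e))).toFinset := by
    intro x hx
    simp only [Finset.mem_insert, Finset.mem_singleton] at hx
    rcases hx with rfl | rfl | rfl <;> rw [List.mem_toFinset]
    · exact List.mem_filter.mpr ⟨h1, by simpa using hw1⟩
    · exact List.mem_filter.mpr ⟨h2, by simpa using hw2⟩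
    · exact List.mem_filter.mpr ⟨h3, by simpa using hw3⟩
  have hcard : ({e₁, e₂, e₃} : Finset (Sym2 V)).card = 3 := by
    rw [Finset.card_insert_of_notMem (by simp [h12, h13]), Finset.card_pair h23]
  calc 3 = ({e₁, e₂, e₃} : Finset (Sym2 V)).card := hcard.symm
  _ ≤ _ := Finset.card_le_card hsub
  _ ≤ (p.edges.filter (fun e => decide (w ∈ e))).length := List.toFinset_card_le _
  _ = incCount p w := List.countP_eq_length_filter.symm

omit [DecidableEq V] in
lemma exists_other_endpoint {u v : V} (p : G.Walk u v) {e : Sym2 V} {w : V}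
    (he : e ∈ p.edges) (hw : w ∈ e) : ∃ z, G.Adj w z ∧ e = s(w, z) := by
  obtain ⟨z, rfl⟩ := Sym2.mem_iff_exists.mp hw
  exact ⟨z, p.edges_subset_edgeSet he, rfl⟩

end Seq8Dev6
section Seq8Dev7
open SimpleGraph Walk Finset

variable {d m : ℕ}

lemma zmod2_succ_ne (q : ZMod 2) : q + 1 ≠ q := by
  intro h
  have : (1 : ZMod 2) = 0 := by
    have := congrArg (fun x => x - q) h
    simpa [add_comm] using this
  exact one_ne_zero this

lemma forward_core (hd : 5 ≤ d) {u v : Fin m × (Fin d → Bool)}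
    (p : (SimpleGraph.pathGraph m □ Qc d).Walk u v) (hpath : p.IsPath)
    (hsupp : ∀ w, w ∈ p.support) {k : Fin d} {q : ZMod 2}
    (hSedges : ∀ w : Fin m × (Fin d → Bool), gcnum k w = q →
      s(w, (w.1, flipCoord w.2 k)) ∈ p.edges)
    (huq : gcnum k u = q) (hvq : gcnum k v = q)
    (huk : u.2 k = false) (hune : u ≠ v) : False := by
  classical
  -- a fresh direction j₀ ≠ k
  have hd2 : 2 ≤ d := by omega
  obtain ⟨j₀, hj₀⟩ : ∃ j₀ : Fin d, j₀ ≠ k := by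
    by_cases hk0 : k.val = 0
    · refine ⟨⟨1, by omega⟩, ?_⟩
      intro h
      rw [Fin.ext_iff] at h
      simp only at h
      omega
    · refine ⟨⟨0, by omega⟩, ?_⟩
      intro h
      rw [Fin.ext_iff] at h
      simp only at h
      omega
  set A0 : Finset (Fin m × (Fin d → Bool)) :=
    univ.filter (fun w => w.2 k = false ∧ gcnum k w = q) with hA0
  set B0 : Finset (Fin m × (Fin d → Bool)) :=
    univ.filter (fun w => w.2 k = false ∧ gcnum k w ≠ q) with hB0
  -- |A0| = |B0|
  have hcards : A0.card = B0.card := by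
    refine Finset.card_bij (fun w _ => (w.1, flipCoord w.2 j₀)) ?_ ?_ ?_
    · intro w hw
      rw [hA0, Finset.mem_filter] at hw
      rw [hB0, Finset.mem_filter]
      refine ⟨Finset.mem_univ _, ?_, ?_⟩
      · show flipCoord w.2 j₀ k = false
        rw [flip_ne' _ (Ne.symm hj₀)]
        exact hw.2.1
      · show gcnum k (w.1, flipCoord w.2 j₀) ≠ q
        unfold gcnum
        show (w.1.val : ZMod 2) + cnum k (flipCoord w.2 j₀) ≠ q
        rw [cnum_flip_ne hj₀, ← add_assoc]
        rw [show (w.1.val : ZMod 2) + cnum k w.2 = gcnum k w from rfl, hw.2.2]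
        exact zmod2_succ_ne q
    · intro w hw w' hw' h
      have h' : (w.1, flipCoord w.2 j₀) = (w'.1, flipCoord w'.2 j₀) := h
      obtain ⟨h1, h2⟩ := Prod.ext_iff.mp h'
      have h3 : w.2 = w'.2 := by
        have := congrArg (fun x => flipCoord x j₀) h2
        simpa [flipCoord_flip_flip] using this
      exact Prod.ext h1 h3
    · intro z hz
      rw [hB0, Finset.mem_filter] at hz
      refine ⟨(z.1, flipCoord z.2 j₀), ?_, ?_⟩
      · rw [hA0, Finset.mem_filter]
        refine ⟨Finset.mem_univ _, ?_, ?_⟩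
        · show flipCoord z.2 j₀ k = false
          rw [flip_ne' _ (Ne.symm hj₀)]
          exact hz.2.1
        · show gcnum k (z.1, flipCoord z.2 j₀) = q
          show (z.1.val : ZMod 2) + cnum k (flipCoord z.2 j₀) = q
          rw [cnum_flip_ne hj₀, ← add_assoc]
          rw [show (z.1.val : ZMod 2) + cnum k z.2 = gcnum k z from rfl]
          rw [zmod2_ne_iff.mp hz.2.2]
          rw [add_assoc, zmod2_add_self, add_zero]
      · show (z.1, flipCoord (flipCoord z.2 j₀) j₀) = z
        rw [flipCoord_flip_flip]
    -- the "good A0-neighbour" map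
  have huA0 : u ∈ A0 := by
    rw [hA0, Finset.mem_filter]
    exact ⟨Finset.mem_univ _, huk, huq⟩
  have hEu : s(u, (u.1, flipCoord u.2 k)) ∈ p.edges := hSedges u huq
  have huinc : incCount p u ≤ 1 := incCount_start_le_one p hpath
  have hinc2 : ∀ w, incCount p w ≤ 2 := incCount_le_two p hpath
  set P : (Fin m × (Fin d → Bool)) → (Fin m × (Fin d → Bool)) → Prop :=
    fun w z => s(w, z) ∈ p.edges ∧ z.2 k = false ∧ gcnum k z = q with hP
  have hgood : ∀ w ∈ B0, ∃ z, P w z := by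
    intro w hw
    rw [hB0, Finset.mem_filter] at hw
    have hwu : w ≠ u := fun h => hw.2.2 (h ▸ huq)
    have hwv : w ≠ v := fun h => hw.2.2 (h ▸ hvq)
    obtain ⟨e₁, e₂, he₁, he₂, hne, hw1, hw2⟩ :=
      exists_two_incident p hpath w (hsupp w) hwu hwv
    obtain ⟨z₁, hadj₁, rfl⟩ := exists_other_endpoint p he₁ hw1
    obtain ⟨z₂, hadj₂, rfl⟩ := exists_other_endpoint p he₂ hw2
    have hzne : z₁ ≠ z₂ := by
      intro h
      exact hne (by rw [h])
    have hz : ∃ z, s(w, z) ∈ p.edges ∧ z ≠ (w.1, flipCoord w.2 k) := by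
      by_cases h1 : z₁ = (w.1, flipCoord w.2 k)
      · exact ⟨z₂, he₂, fun h2 => hzne (h1.trans h2.symm)⟩
      · exact ⟨z₁, he₁, h1⟩
    obtain ⟨z, hze, hzne'⟩ := hz
    have hadj : (SimpleGraph.pathGraph m □ Qc d).Adj w z := by
      have := p.edges_subset_edgeSet hze
      exact this
    obtain ⟨hcoord, hgc⟩ := gcnum_adj hadj hzne'
    refine ⟨z, hze, by rw [hcoord]; exact hw.2.1, ?_⟩
    rw [hgc, zmod2_ne_iff.mp hw.2.2, add_assoc, zmod2_add_self, add_zero]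
  set f : (Fin m × (Fin d → Bool)) → (Fin m × (Fin d → Bool)) :=
    fun w => if h : ∃ z, P w z then h.choose else w with hf
  have hfP : ∀ w ∈ B0, P w (f w) := by
    intro w hw
    have h : ∃ z, P w z := hgood w hw
    rw [hf]
    simp only [dif_pos h]
    exact h.choose_spec
  -- f w ≠ u for w ∈ B0
  have hfu : ∀ w ∈ B0, f w ≠ u := by
    intro w hw heq
    obtain ⟨hedge, hcoord, hgc⟩ := hfP w hw
    rw [heq] at hedge
    rw [hB0, Finset.mem_filter] at hw
    have hne : s(w, u) ≠ s(u, (u.1, flipCoord u.2 k)) := by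
      intro h
      rcases Sym2.eq_iff.mp h with ⟨h1, h2⟩ | ⟨h1, h2⟩
      · -- w = u
        exact hw.2.2 (h1 ▸ huq)
      · -- w = partner of u : coordinate k contradiction
        have : w.2 k = true := by
          rw [h1]
          show flipCoord u.2 k k = true
          rw [flip_self, huk]
          rfl
        rw [hw.2.1] at this
        exact absurd this (by simp)
    have := incCount_ge_two p hpath hedge hEu hne
      (Sym2.mem_mk_right _ _) (Sym2.mem_mk_left _ _)
    omega
  -- f is injective on B0
  have hinj : Set.InjOn f B0 := by
    intro w hw w' hw' heq
    by_contra hne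
    set a := f w with ha
    obtain ⟨hedge, hcoord, hgc⟩ := hfP w hw
    obtain ⟨hedge', hcoord', hgc'⟩ := hfP w' hw'
    rw [← heq] at hedge' hcoord' hgc'
    have hEa : s(a, (a.1, flipCoord a.2 k)) ∈ p.edges := hSedges a hgc
    have hwB : w ∈ B0 := hw
    have hw'B : w' ∈ B0 := hw'
    rw [hB0, Finset.mem_filter] at hwB hw'B
    have hwa : w ≠ a := fun h => hwB.2.2 (h ▸ hgc)
    have hw'a : w' ≠ a := fun h => hw'B.2.2 (h ▸ hgc)
    have hne1 : s(w, a) ≠ s(w', a) := by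
      intro h
      rcases Sym2.eq_iff.mp h with ⟨h1, h2⟩ | ⟨h1, h2⟩
      · exact hne (h1 ▸ rfl)
      · exact hwa (h1 ▸ rfl)
    have hpart : ∀ x : Fin m × (Fin d → Bool), x.2 k = false →
        x ≠ (a.1, flipCoord a.2 k) := by
      intro x hx h
      have : x.2 k = true := by
        rw [h]
        show flipCoord a.2 k k = true
        rw [flip_self, hcoord]
        rfl
      rw [hx] at this
      exact absurd this (by simp)
    have hne2 : s(w, a) ≠ s(a, (a.1, flipCoord a.2 k)) := by
      intro h
      rcases Sym2.eq_iff.mp h with ⟨h1, h2⟩ | ⟨h1, h2⟩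
      · exact hwa (h1 ▸ rfl)
      · exact (hpart w hwB.2.1 h1).elim
    have hne3 : s(w', a) ≠ s(a, (a.1, flipCoord a.2 k)) := by
      intro h
      rcases Sym2.eq_iff.mp h with ⟨h1, h2⟩ | ⟨h1, h2⟩
      · exact hw'a (h1 ▸ rfl)
      · exact (hpart w' hw'B.2.1 h1).elim
    have := incCount_ge_three p hedge hedge' hEa hne1 hne2 hne3
      (Sym2.mem_mk_right _ _) (Sym2.mem_mk_right _ _) (Sym2.mem_mk_left _ _)
    have h2 := hinc2 a
    rw [← ha] at this
    omega
  -- conclude by cardinality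
  have hmaps : ∀ w ∈ B0, f w ∈ A0.erase u := by
    intro w hw
    obtain ⟨hedge, hcoord, hgc⟩ := hfP w hw
    rw [Finset.mem_erase]
    refine ⟨hfu w hw, ?_⟩
    rw [hA0, Finset.mem_filter]
    exact ⟨Finset.mem_univ _, hcoord, hgc⟩
  have hle : B0.card ≤ (A0.erase u).card :=
    Finset.card_le_card_of_injOn f hmaps hinj
  rw [Finset.card_erase_of_mem huA0] at hle
  have hpos : 1 ≤ A0.card := Finset.card_pos.mpr ⟨u, huA0⟩
  omega

lemma isHamiltonian_reverse {V : Type*} [DecidableEq V] {G : SimpleGraph V} {u v : V}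
    {p : G.Walk u v} (hp : p.IsHamiltonian) : p.reverse.IsHamiltonian := by
  intro w
  rw [Walk.support_reverse, List.count_reverse]
  exact hp w

lemma forward_dir (hd : 5 ≤ d)
    (M : Set (Sym2 (Fin m × (Fin d → Bool)))) {u v : Fin m × (Fin d → Bool)}
    (hpar : gwt u ≠ gwt v)
    (p : (SimpleGraph.pathGraph m □ Qc d).Walk u v) (hham : p.IsHamiltonian)
    (hext : ∀ e ∈ M, e ∈ p.edges)
    {k : Fin d} {q : ZMod 2} (hsub : seqHalfLayer m d k q ⊆ M)
    (hcu : coveredBy (seqHalfLayer m d k q) u) (hcv : coveredBy (seqHalfLayer m d k q) v) :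
    False := by
  have huq : gcnum k u = q := covered_seq_iff.mp hcu
  have hvq : gcnum k v = q := covered_seq_iff.mp hcv
  have hune : u ≠ v := fun h => hpar (h ▸ rfl)
  have hSedges : ∀ w : Fin m × (Fin d → Bool), gcnum k w = q →
      s(w, (w.1, flipCoord w.2 k)) ∈ p.edges :=
    fun w hw => hext _ (hsub (seq_edge_mem hw))
  have hbz : bz (u.2 k) ≠ bz (v.2 k) := by
    intro h
    apply hpar
    have h1 : gwt u + bz (u.2 k) = gwt v + bz (v.2 k) := by
      rw [← gcnum_eq_gwt, ← gcnum_eq_gwt, huq, hvq]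
    rw [h] at h1
    exact add_right_cancel h1
  cases hu2 : u.2 k
  · exact forward_core hd p hham.isPath hham.mem_support hSedges huq hvq hu2 hune
  · have hv2 : v.2 k = false := by
      cases hv2 : v.2 k
      · rfl
      · rw [hu2, hv2] at hbz
        exact absurd rfl hbz
    have hSedges' : ∀ w : Fin m × (Fin d → Bool), gcnum k w = q →
        s(w, (w.1, flipCoord w.2 k)) ∈ p.reverse.edges := by
      intro w hw
      rw [Walk.edges_reverse, List.mem_reverse]
      exact hSedges w hw
    exact forward_core hd p.reverse (isHamiltonian_reverse hham).isPath
      (isHamiltonian_reverse hham).mem_support hSedges' hvq huq hv2 (Ne.symm hune)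
end Seq8Dev7
section Seq8Dev8
open Finset

variable {d : ℕ} {M : Set (Sym2 (Fin d → Bool))}

lemma noneC_constrained (hd : 5 ≤ d) (hM : IsMatchingOn (Qc d) M) {a : Fin d → Bool} {k₀ : Fin d}
    (hk : halfLayer d k₀ (cnum k₀ a) ⊆ M) {b : Fin d → Bool} (hb : cnum k₀ b ≠ cnum k₀ a) :
    NoneC M a b ∧ NoneC M b a := by
  refine noneC_pair hM ?_ ?_ ?_
  · intro k hk'
    have hkk : k = k₀ := covering_layer_unique hd hM hk' hk
    subst hkk
    exact hb
  · intro k halm heq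
    have hkk : k = k₀ := almostIn_unique hd hM halm (full_almostIn hd hk)
    subst hkk
    apply hb
    rw [heq, cnum_flip_self]
  · intro w hw heq
    have hEdge : s(a, flipCoord a k₀) ∈ M := hk (edge_mem_halfLayer rfl)
    have hwf : w = flipCoord a k₀ := matching_unique hM hw hEdge
    apply hb
    rw [heq, hwf, cnum_flip_self]

lemma noneC_free (hd : 5 ≤ d) (hM : IsMatchingOn (Qc d) M) {a b : Fin d → Bool}
    (hno : ∀ k, ¬ halfLayer d k (cnum k a) ⊆ M)
    (hbad : b ∉ badFree M a) : NoneC M a b ∧ NoneC M b a := by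
  obtain ⟨h2, h3⟩ := badFree_works hd hM hbad
  refine noneC_pair hM ?_ ?_ ?_
  · intro k hk
    exact absurd hk (hno k)
  · exact h2
  · exact h3

end Seq8Dev8

section Seq8Dev9
open SimpleGraph Walk

variable {VB : Type*} [DecidableEq VB] {G : SimpleGraph VB}

lemma glue_ham {x y z w : VB} (W1 : G.Walk x y) (hadj : G.Adj y z) (W2 : G.Walk z w)
    (S : VB → Prop)
    (hS1 : ∀ t ∈ W1.support, S t) (hS2 : ∀ t ∈ W2.support, ¬ S t)
    (hc1 : ∀ t, S t → W1.support.count t = 1) (hc2 : ∀ t, ¬ S t → W2.support.count t = 1) :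
    (W1.append (Walk.cons hadj W2)).IsHamiltonian := by
  intro t
  rw [Walk.support_append, List.count_append, Walk.support_cons, List.tail_cons]
  by_cases ht : S t
  · rw [hc1 t ht, List.count_eq_zero_of_not_mem (fun hmem => hS2 t hmem ht)]
  · rw [hc2 t ht, List.count_eq_zero_of_not_mem (fun hmem => ht (hS1 t hmem))]

lemma count_support_map {VA : Type*} [DecidableEq VA] {H : SimpleGraph VA}
    {a b : VA} (W : H.Walk a b) (f : H →g G) (hf : Function.Injective f)
    (t : VA) : ((W.map f).support.count (f t)) = W.support.count t := by
  rw [Walk.support_map]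
  exact List.count_map_of_injective _ _ hf _

lemma count_support_map_zero {VA : Type*} [DecidableEq VA] {H : SimpleGraph VA}
    {a b : VA} (W : H.Walk a b) (f : H →g G) {t : VB}
    (ht : ∀ s : VA, f s ≠ t) : ((W.map f).support.count t) = 0 := by
  rw [Walk.support_map]
  apply List.count_eq_zero_of_not_mem
  intro hmem
  obtain ⟨s, -, hs⟩ := List.mem_map.mp hmem
  exact ht s hs

end Seq8Dev9
section Seq8Dev10
open SimpleGraph Walk Finset

variable {d : ℕ}

lemma zmod2_resolve : ∀ a b : ZMod 2, a ≠ 1 + b → b = a := by decide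

lemma cnum_target {b : Fin d → Bool} {k : Fin d} {r A : ZMod 2}
    (hwt : wt b = r) (hb : b k = bOf (A + 1 + r)) : cnum k b ≠ A := by
  have hc : cnum k b = A + 1 := by
    unfold cnum
    rw [hwt, hb, bz_bOf]
    have : r + (A + 1 + r) = A + 1 + (r + r) := by ring
    rw [this, zmod2_add_self, add_zero]
  rw [hc]
  exact zmod2_succ_ne A

lemma exists_connector (hd : 5 ≤ d)
    (M₀ M₁ : Set (Sym2 (Fin d → Bool)))
    (hM₀ : IsMatchingOn (Qc d) M₀) (hM₁ : IsMatchingOn (Qc d) M₁)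
    (u2 v2 : Fin d → Bool) (r : ZMod 2)
    (hstuck : ∀ k, halfLayer d k (cnum k u2) ⊆ M₀ → halfLayer d k (cnum k v2) ⊆ M₁ →
      cnum k u2 = cnum k v2) :
    ∃ b : Fin d → Bool, wt b = r ∧ NoneC M₀ u2 b ∧ NoneC M₁ b v2 := by
  by_cases hH0 : ∃ k, halfLayer d k (cnum k u2) ⊆ M₀
  · obtain ⟨k₀, hk₀⟩ := hH0
    by_cases hH1 : ∃ k, halfLayer d k (cnum k v2) ⊆ M₁
    · obtain ⟨k₁, hk₁⟩ := hH1
      by_cases hkk : k₀ = k₁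
      · subst hkk
        have hAA : cnum k₀ u2 = cnum k₀ v2 := hstuck k₀ hk₀ hk₁
        obtain ⟨b, hbk, hbw, -⟩ :=
          exists_vertex1 hd k₀ (bOf (cnum k₀ u2 + 1 + r)) r ∅ (by simp)
        have hne₀ : cnum k₀ b ≠ cnum k₀ u2 := cnum_target hbw hbk
        have hne₁ : cnum k₀ b ≠ cnum k₀ v2 := by rw [← hAA]; exact hne₀
        exact ⟨b, hbw, (noneC_constrained hd hM₀ hk₀ hne₀).1,
          (noneC_constrained hd hM₁ hk₁ hne₁).2⟩
      · obtain ⟨b, hbk₀, hbk₁, hbw, -⟩ :=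
          exists_vertex2 hd hkk (bOf (cnum k₀ u2 + 1 + r)) (bOf (cnum k₁ v2 + 1 + r)) r ∅
            (by simp)
        have hne₀ : cnum k₀ b ≠ cnum k₀ u2 := cnum_target hbw hbk₀
        have hne₁ : cnum k₁ b ≠ cnum k₁ v2 := cnum_target hbw hbk₁
        exact ⟨b, hbw, (noneC_constrained hd hM₀ hk₀ hne₀).1,
          (noneC_constrained hd hM₁ hk₁ hne₁).2⟩
    · push_neg at hH1
      obtain ⟨b, hbk, hbw, hbbad⟩ :=
        exists_vertex1 hd k₀ (bOf (cnum k₀ u2 + 1 + r)) r (badFree M₁ v2)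
          ((badFree_card M₁ v2).trans (by omega))
      have hne₀ : cnum k₀ b ≠ cnum k₀ u2 := cnum_target hbw hbk
      exact ⟨b, hbw, (noneC_constrained hd hM₀ hk₀ hne₀).1,
        (noneC_free hd hM₁ hH1 hbbad).2⟩
  · push_neg at hH0
    by_cases hH1 : ∃ k, halfLayer d k (cnum k v2) ⊆ M₁
    · obtain ⟨k₁, hk₁⟩ := hH1
      obtain ⟨b, hbk, hbw, hbbad⟩ :=
        exists_vertex1 hd k₁ (bOf (cnum k₁ v2 + 1 + r)) r (badFree M₀ u2)
          ((badFree_card M₀ u2).trans (by omega))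
      have hne₁ : cnum k₁ b ≠ cnum k₁ v2 := cnum_target hbw hbk
      exact ⟨b, hbw, (noneC_free hd hM₀ hH0 hbbad).1,
        (noneC_constrained hd hM₁ hk₁ hne₁).2⟩
    · push_neg at hH1
      obtain ⟨b, -, hbw, hbbad⟩ :=
        exists_vertex1 hd ⟨0, by omega⟩ false r (badFree M₀ u2 ∪ badFree M₁ v2)
          ((Finset.card_union_le _ _).trans
            (by have := badFree_card M₀ u2; have := badFree_card M₁ v2; omega))
      rw [Finset.notMem_union] at hbbad
      exact ⟨b, hbw, (noneC_free hd hM₀ hH0 hbbad.1).1,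
        (noneC_free hd hM₁ hH1 hbbad.2).2⟩

end Seq8Dev10
section Seq8Dev11
open SimpleGraph Walk Finset

variable {d : ℕ}

lemma backward_base (hd : 5 ≤ d) (hB : ConjB d)
    (Ms : Fin 2 → Set (Sym2 (Fin d → Bool))) (hMs : ∀ i, IsMatchingOn (Qc d) (Ms i))
    (u v : Fin 2 × (Fin d → Bool)) (hu : u.1.val = 0) (hv : v.1.val = 1)
    (hpar : gwt u ≠ gwt v)
    (hno : ¬ ∃ (k : Fin d) (p : ZMod 2),
      seqHalfLayer 2 d k p ⊆ (⋃ i, liftEdges i (Ms i)) ∧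
      coveredBy (seqHalfLayer 2 d k p) u ∧ coveredBy (seqHalfLayer 2 d k p) v) :
    ExtendsHamPath (SimpleGraph.pathGraph 2 □ Qc d) (⋃ i, liftEdges i (Ms i)) u v := by
  obtain ⟨u1, u2⟩ := u
  obtain ⟨v1, v2⟩ := v
  have hu1 : u1 = (0 : Fin 2) := Fin.ext (by simpa using hu)
  have hv1 : v1 = (1 : Fin 2) := Fin.ext (by simpa using hv)
  subst hu1
  subst hv1
  have hpar' : wt u2 ≠ 1 + wt v2 := by
    intro h
    apply hpar
    show ((0 : Fin 2).val : ZMod 2) + wt u2 = ((1 : Fin 2).val : ZMod 2) + wt v2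
    simpa using h
  have hv2 : wt v2 = wt u2 := zmod2_resolve _ _ hpar'
  set r : ZMod 2 := wt u2 + 1 with hr
  -- the stuck case yields a sequence of half-layers
  have hstuck : ∀ k, halfLayer d k (cnum k u2) ⊆ Ms 0 → halfLayer d k (cnum k v2) ⊆ Ms 1 →
      cnum k u2 = cnum k v2 := by
    intro k hk₀ hk₁
    by_contra hne
    apply hno
    refine ⟨k, cnum k u2, ?_, ?_, ?_⟩
    · rw [seq_sub_iff]
      intro i
      have hq1 : cnum k v2 = cnum k u2 + 1 := zmod2_ne_iff.mp (Ne.symm hne)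
      fin_cases i
      · simpa using hk₀
      · simpa [hq1] using hk₁
    · rw [covered_seq_iff]
      show ((0 : Fin 2).val : ZMod 2) + cnum k u2 = cnum k u2
      simp
    · rw [covered_seq_iff]
      show ((1 : Fin 2).val : ZMod 2) + cnum k v2 = cnum k u2
      have hq1 : cnum k v2 = cnum k u2 + 1 := zmod2_ne_iff.mp (Ne.symm hne)
      rw [hq1]
      have : ((1 : Fin 2).val : ZMod 2) = 1 := by simp
      rw [this, add_comm (cnum k u2) 1, ← add_assoc, zmod2_add_self, zero_add]
  obtain ⟨b, hbwt, hN0, hN1⟩ := exists_connector hd (Ms 0) (Ms 1) (hMs 0) (hMs 1) u2 v2 r hstuck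
  have hwtne0 : wt u2 ≠ wt b := by
    rw [hbwt, hr]
    intro h
    exact zmod2_succ_ne _ h.symm
  have hwtne1 : wt b ≠ wt v2 := by
    rw [hbwt, hr, hv2]
    exact zmod2_succ_ne _
  obtain ⟨W₀, hW₀ham, hW₀ext⟩ := (hB (Ms 0) (hMs 0) u2 b hwtne0).mpr hN0
  obtain ⟨W₁, hW₁ham, hW₁ext⟩ := (hB (Ms 1) (hMs 1) b v2 hwtne1).mpr hN1
  have hpadj : (SimpleGraph.pathGraph 2).Adj (0 : Fin 2) (1 : Fin 2) := by
    rw [SimpleGraph.pathGraph_adj]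
    left
    decide
  have hcross : (SimpleGraph.pathGraph 2 □ Qc d).Adj ((0 : Fin 2), b) ((1 : Fin 2), b) :=
    big_adj.mpr (Or.inl ⟨hpadj, rfl⟩)
  refine ⟨((W₀.map (homCopy 2 d 0)).append
    (Walk.cons hcross (W₁.map (homCopy 2 d 1)))), ?_, ?_⟩
  · apply glue_ham _ _ _ (fun t => t.1 = (0 : Fin 2))
    · intro t hmem
      rw [Walk.support_map] at hmem
      obtain ⟨s, -, rfl⟩ := List.mem_map.mp hmem
      rfl
    · intro t hmem ht
      rw [Walk.support_map] at hmem
      obtain ⟨s, -, rfl⟩ := List.mem_map.mp hmem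
      exact absurd ht (show ¬ ((1 : Fin 2) = (0 : Fin 2)) by decide)
    · intro t ht
      have hteq : t = (homCopy 2 d 0) t.2 := Prod.ext ht rfl
      rw [hteq, count_support_map _ _ (homCopy_injective 2 d 0)]
      exact hW₀ham t.2
    · intro t ht
      have ht1 : t.1 = (1 : Fin 2) := by
        have := t.1.isLt
        apply Fin.ext
        have h0 : t.1.val ≠ 0 := fun h => ht (Fin.ext (by simpa using h))
        simp only [Fin.val_one]
        omega
      have hteq : t = (homCopy 2 d 1) t.2 := Prod.ext ht1 rfl
      rw [hteq, count_support_map _ _ (homCopy_injective 2 d 1)]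
      exact hW₁ham t.2
  · intro e he
    rw [Set.mem_iUnion] at he
    obtain ⟨i, f₀, hf₀, rfl⟩ := he
    rw [Walk.edges_append, List.mem_append, Walk.edges_cons]
    fin_cases i
    · left
      rw [Walk.edges_map]
      exact List.mem_map_of_mem (hW₀ext f₀ hf₀)
    · right
      apply List.mem_cons_of_mem
      rw [Walk.edges_map]
      exact List.mem_map_of_mem (hW₁ext f₀ hf₀)

end Seq8Dev11
section Seq8Dev12
open SimpleGraph Walk Finset

variable {d : ℕ}

lemma zmod2_shift {a b c : ZMod 2} (h : a + b = c) : b = c + a := by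
  rw [← h, add_comm a b, add_assoc, zmod2_add_self, add_zero]

lemma exists_connector_step (hd : 5 ≤ d) (M₁ : Set (Sym2 (Fin d → Bool)))
    (hM₁ : IsMatchingOn (Qc d) M₁) (v2 : Fin d → Bool) (r : ZMod 2)
    (P : Fin d → Prop) (A : Fin d → ZMod 2)
    (hPuniq : ∀ k k', P k → P k' → k = k')
    (hstuck : ∀ k, P k → halfLayer d k (cnum k v2) ⊆ M₁ → A k = cnum k v2) :
    ∃ b, wt b = r ∧ NoneC M₁ b v2 ∧ ∀ k, P k → cnum k b ≠ A k := by
  by_cases hP : ∃ k, P k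
  · obtain ⟨k₀, hk₀⟩ := hP
    have hPall : ∀ k, P k → k = k₀ := fun k hk => hPuniq k k₀ hk hk₀
    by_cases hH1 : ∃ k, halfLayer d k (cnum k v2) ⊆ M₁
    · obtain ⟨k₁, hk₁⟩ := hH1
      by_cases hkk : k₀ = k₁
      · subst hkk
        have hAA : A k₀ = cnum k₀ v2 := hstuck k₀ hk₀ hk₁
        obtain ⟨b, hbk, hbw, -⟩ :=
          exists_vertex1 hd k₀ (bOf (A k₀ + 1 + r)) r ∅ (by simp)
        have hne : cnum k₀ b ≠ A k₀ := cnum_target hbw hbk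
        have hne' : cnum k₀ b ≠ cnum k₀ v2 := by rw [← hAA]; exact hne
        refine ⟨b, hbw, (noneC_constrained hd hM₁ hk₁ hne').2, ?_⟩
        intro k hk
        rw [hPall k hk]
        exact hne
      · obtain ⟨b, hbk₀, hbk₁, hbw, -⟩ :=
          exists_vertex2 hd hkk (bOf (A k₀ + 1 + r)) (bOf (cnum k₁ v2 + 1 + r)) r ∅ (by simp)
        have hne : cnum k₀ b ≠ A k₀ := cnum_target hbw hbk₀
        have hne' : cnum k₁ b ≠ cnum k₁ v2 := cnum_target hbw hbk₁
        refine ⟨b, hbw, (noneC_constrained hd hM₁ hk₁ hne').2, ?_⟩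
        intro k hk
        rw [hPall k hk]
        exact hne
    · push_neg at hH1
      obtain ⟨b, hbk, hbw, hbbad⟩ :=
        exists_vertex1 hd k₀ (bOf (A k₀ + 1 + r)) r (badFree M₁ v2)
          ((badFree_card M₁ v2).trans (by omega))
      have hne : cnum k₀ b ≠ A k₀ := cnum_target hbw hbk
      refine ⟨b, hbw, (noneC_free hd hM₁ hH1 hbbad).2, ?_⟩
      intro k hk
      rw [hPall k hk]
      exact hne
  · push_neg at hP
    by_cases hH1 : ∃ k, halfLayer d k (cnum k v2) ⊆ M₁
    · obtain ⟨k₁, hk₁⟩ := hH1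
      obtain ⟨b, hbk, hbw, -⟩ :=
        exists_vertex1 hd k₁ (bOf (cnum k₁ v2 + 1 + r)) r ∅ (by simp)
      have hne' : cnum k₁ b ≠ cnum k₁ v2 := cnum_target hbw hbk
      exact ⟨b, hbw, (noneC_constrained hd hM₁ hk₁ hne').2,
        fun k hk => absurd hk (hP k)⟩
    · push_neg at hH1
      obtain ⟨b, -, hbw, hbbad⟩ :=
        exists_vertex1 hd ⟨0, by omega⟩ false r (badFree M₁ v2)
          ((badFree_card M₁ v2).trans (by omega))
      exact ⟨b, hbw, (noneC_free hd hM₁ hH1 hbbad).2, fun k hk => absurd hk (hP k)⟩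

end Seq8Dev12
section Seq8Dev13
open SimpleGraph Walk Finset

variable {d : ℕ}

lemma backward_step (hd : 5 ≤ d) (hB : ConjB d) (n : ℕ) (hn : 2 ≤ n)
    (IH : ∀ (Ms : Fin n → Set (Sym2 (Fin d → Bool))), (∀ i, IsMatchingOn (Qc d) (Ms i)) →
      ∀ u v : Fin n × (Fin d → Bool), u.1.val = 0 → v.1.val = n - 1 → gwt u ≠ gwt v →
      (¬ ∃ (k : Fin d) (p : ZMod 2), seqHalfLayer n d k p ⊆ (⋃ i, liftEdges i (Ms i)) ∧
        coveredBy (seqHalfLayer n d k p) u ∧ coveredBy (seqHalfLayer n d k p) v) →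
      ExtendsHamPath (SimpleGraph.pathGraph n □ Qc d) (⋃ i, liftEdges i (Ms i)) u v)
    (Ms : Fin (n+1) → Set (Sym2 (Fin d → Bool))) (hMs : ∀ i, IsMatchingOn (Qc d) (Ms i))
    (u v : Fin (n+1) × (Fin d → Bool)) (hu : u.1.val = 0) (hv : v.1.val = n)
    (hpar : gwt u ≠ gwt v)
    (hno : ¬ ∃ (k : Fin d) (p : ZMod 2),
      seqHalfLayer (n+1) d k p ⊆ (⋃ i, liftEdges i (Ms i)) ∧
      coveredBy (seqHalfLayer (n+1) d k p) u ∧ coveredBy (seqHalfLayer (n+1) d k p) v) :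
    ExtendsHamPath (SimpleGraph.pathGraph (n+1) □ Qc d) (⋃ i, liftEdges i (Ms i)) u v := by
  obtain ⟨u1, u2⟩ := u
  obtain ⟨v1, v2⟩ := v
  have hu1 : u1 = ⟨0, Nat.succ_pos n⟩ := Fin.ext hu
  have hv1 : v1 = ⟨n, Nat.lt_succ_self n⟩ := Fin.ext hv
  subst hu1
  subst hv1
  set Ms' : Fin n → Set (Sym2 (Fin d → Bool)) :=
    fun i => Ms (Fin.castLE (Nat.le_succ n) i) with hMs'
  have hpar' : wt u2 ≠ (n : ZMod 2) + wt v2 := by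
    intro h
    apply hpar
    show (((⟨0, by omega⟩ : Fin (n+1))).val : ZMod 2) + wt u2
      = (((⟨n, by omega⟩ : Fin (n+1))).val : ZMod 2) + wt v2
    simpa using h
  set r : ZMod 2 := wt v2 + 1 with hr
  have hcast_n : ((n - 1 : ℕ) : ZMod 2) + 1 = (n : ZMod 2) := by
    have h1 : n - 1 + 1 = n := by omega
    rw [← h1]
    push_cast
    ring
  set P : Fin d → Prop :=
    fun k => seqHalfLayer n d k (cnum k u2) ⊆ (⋃ i, liftEdges i (Ms' i)) with hPdef
  set A : Fin d → ZMod 2 := fun k => cnum k u2 + ((n - 1 : ℕ) : ZMod 2) with hAdef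
  have hPlayer : ∀ k, P k → halfLayer d k (cnum k u2) ⊆ Ms' ⟨0, by omega⟩ := by
    intro k hk
    have h2 := (seq_sub_iff Ms').mp hk ⟨0, by omega⟩
    simpa using h2
  have hPuniq : ∀ k k', P k → P k' → k = k' := fun k k' hk hk' =>
    covering_layer_unique hd (hMs _) (hPlayer k hk) (hPlayer k' hk')
  have hstuck : ∀ k, P k → halfLayer d k (cnum k v2) ⊆ Ms ⟨n, by omega⟩ →
      A k = cnum k v2 := by
    intro k hk hk₁
    by_contra hne
    apply hno
    have hv2c : cnum k v2 = cnum k u2 + (n : ZMod 2) := by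
      have h1 : cnum k v2 = A k + 1 := zmod2_ne_iff.mp (Ne.symm hne)
      rw [h1, hAdef]
      show cnum k u2 + ((n - 1 : ℕ) : ZMod 2) + 1 = cnum k u2 + (n : ZMod 2)
      rw [add_assoc, hcast_n]
    refine ⟨k, cnum k u2, ?_, ?_, ?_⟩
    · rw [seq_sub_iff]
      intro i
      by_cases hi : i.val < n
      · have h2 := (seq_sub_iff Ms').mp hk ⟨i.val, hi⟩
        have hMs'eq : Ms' ⟨i.val, hi⟩ = Ms i := by
          have hceq : Fin.castLE (Nat.le_succ n) ⟨i.val, hi⟩ = i := Fin.ext rfl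
          show Ms (Fin.castLE (Nat.le_succ n) ⟨i.val, hi⟩) = Ms i
          rw [hceq]
        rw [hMs'eq] at h2
        exact h2
      · have hieq : i = ⟨n, Nat.lt_succ_self n⟩ := by
          apply Fin.ext
          show i.val = n
          have := i.isLt
          omega
        subst hieq
        show halfLayer d k (cnum k u2 + ((n : ℕ) : ZMod 2)) ⊆ Ms ⟨n, Nat.lt_succ_self n⟩
        rw [← hv2c]
        exact hk₁
    · rw [covered_seq_iff]
      show (((⟨0, by omega⟩ : Fin (n+1))).val : ZMod 2) + cnum k u2 = cnum k u2
      simp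
    · rw [covered_seq_iff]
      show (((⟨n, by omega⟩ : Fin (n+1))).val : ZMod 2) + cnum k v2 = cnum k u2
      rw [hv2c]
      show ((n : ℕ) : ZMod 2) + (cnum k u2 + (n : ZMod 2)) = cnum k u2
      rw [add_comm (cnum k u2) ((n : ZMod 2)), ← add_assoc, zmod2_add_self, zero_add]
  obtain ⟨a, hawt, hN1, hPavoid⟩ :=
    exists_connector_step hd (Ms ⟨n, by omega⟩) (hMs _) v2 r P A hPuniq hstuck
  -- apply the induction hypothesis on the first n copies
  have hno' : ¬ ∃ (k : Fin d) (p : ZMod 2),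
      seqHalfLayer n d k p ⊆ (⋃ i, liftEdges i (Ms' i)) ∧
      coveredBy (seqHalfLayer n d k p) ((⟨0, by omega⟩ : Fin n), u2) ∧
      coveredBy (seqHalfLayer n d k p) ((⟨n-1, by omega⟩ : Fin n), a) := by
    rintro ⟨k, p, hsub, hcu, hcv⟩
    rw [covered_seq_iff] at hcu hcv
    have hp : p = cnum k u2 := by
      rw [← hcu]
      simp [gcnum]
    subst hp
    have hca : cnum k a = A k := by
      rw [hAdef]
      show cnum k a = cnum k u2 + ((n - 1 : ℕ) : ZMod 2)
      exact zmod2_shift hcv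
    exact hPavoid k hsub hca
  have hpar'' : gwt ((⟨0, by omega⟩ : Fin n), u2) ≠ gwt ((⟨n-1, by omega⟩ : Fin n), a) := by
    intro h
    apply hpar'
    have h2 : wt u2 = ((n-1 : ℕ) : ZMod 2) + wt a := by simpa [gwt] using h
    rw [h2, hawt, hr]
    rw [show ((n-1:ℕ) : ZMod 2) + (wt v2 + 1) = (((n-1:ℕ) : ZMod 2) + 1) + wt v2 by ring,
      hcast_n]
  obtain ⟨W', hW'ham, hW'ext⟩ := IH Ms' (fun i => hMs _)
    ((⟨0, by omega⟩ : Fin n), u2) ((⟨n-1, by omega⟩ : Fin n), a) rfl rfl hpar'' hno'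
  have hwtne1 : wt a ≠ wt v2 := by
    rw [hawt, hr]
    exact zmod2_succ_ne _
  obtain ⟨W₁, hW₁ham, hW₁ext⟩ := (hB (Ms ⟨n, by omega⟩) (hMs _) a v2 hwtne1).mpr hN1
  have hpadj : (SimpleGraph.pathGraph (n+1)).Adj
      (Fin.castLE (Nat.le_succ n) ⟨n-1, by omega⟩) ⟨n, by omega⟩ := by
    rw [SimpleGraph.pathGraph_adj]
    left
    show (n - 1) + 1 = n
    omega
  have hcross : (SimpleGraph.pathGraph (n+1) □ Qc d).Adj
      ((homCast d (Nat.le_succ n)) ((⟨n-1, by omega⟩ : Fin n), a)) ((⟨n, by omega⟩ : Fin (n+1)), a) :=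
    big_adj.mpr (Or.inl ⟨hpadj, rfl⟩)
  refine ⟨(W'.map (homCast d (Nat.le_succ n))).append
    (Walk.cons hcross (W₁.map (homCopy (n+1) d ⟨n, by omega⟩))), ?_, ?_⟩
  · apply glue_ham _ _ _ (fun t => t.1.val < n)
    · intro t hmem
      rw [Walk.support_map] at hmem
      obtain ⟨s, -, rfl⟩ := List.mem_map.mp hmem
      exact s.1.isLt
    · intro t hmem ht
      rw [Walk.support_map] at hmem
      obtain ⟨s, -, rfl⟩ := List.mem_map.mp hmem
      exact absurd ht (lt_irrefl n)
    · intro t ht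
      have hteq : t = (homCast d (Nat.le_succ n)) ((⟨t.1.val, ht⟩ : Fin n), t.2) :=
        Prod.ext (Fin.ext rfl) rfl
      rw [hteq, count_support_map _ _ (homCast_injective d _)]
      exact hW'ham _
    · intro t ht
      have ht1 : t.1 = ⟨n, by omega⟩ := by
        apply Fin.ext
        show t.1.val = n
        have := t.1.isLt
        omega
      have hteq : t = (homCopy (n+1) d ⟨n, by omega⟩) t.2 := Prod.ext ht1 rfl
      rw [hteq, count_support_map _ _ (homCopy_injective _ _ _)]
      exact hW₁ham t.2
  · intro e he
    rw [Set.mem_iUnion] at he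
    obtain ⟨i, f₀, hf₀, rfl⟩ := he
    rw [Walk.edges_append, List.mem_append, Walk.edges_cons]
    by_cases hi : i.val < n
    · left
      rw [Walk.edges_map]
      have hMs'mem : f₀ ∈ Ms' ⟨i.val, hi⟩ := by
        show f₀ ∈ Ms (Fin.castLE (Nat.le_succ n) ⟨i.val, hi⟩)
        have hceq : Fin.castLE (Nat.le_succ n) ⟨i.val, hi⟩ = i := Fin.ext rfl
        rw [hceq]
        exact hf₀
      have hsmall : Sym2.map (fun x => ((⟨i.val, hi⟩ : Fin n), x)) f₀ ∈ W'.edges := by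
        apply hW'ext
        rw [Set.mem_iUnion]
        exact ⟨⟨i.val, hi⟩, f₀, hMs'mem, rfl⟩
      have hmem2 := List.mem_map_of_mem (f := Sym2.map (homCast d (Nat.le_succ n))) hsmall
      rw [Sym2.map_map] at hmem2
      have hfun : ((homCast d (Nat.le_succ n)) ∘ fun x => ((⟨i.val, hi⟩ : Fin n), x))
          = (fun x => (i, x)) := funext fun x => Prod.ext (Fin.ext rfl) rfl
      rw [hfun] at hmem2
      exact hmem2
    · right
      have hieq : i = ⟨n, Nat.lt_succ_self n⟩ := by
        apply Fin.ext
        show i.val = n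
        have := i.isLt
        omega
      subst hieq
      apply List.mem_cons_of_mem
      rw [Walk.edges_map]
      exact List.mem_map_of_mem (hW₁ext f₀ hf₀)

end Seq8Dev13
section Seq8Dev14

lemma backward_dir {d : ℕ} (hd : 5 ≤ d) (hB : ConjB d) :
    ∀ n, 2 ≤ n → ∀ (Ms : Fin n → Set (Sym2 (Fin d → Bool))),
      (∀ i, IsMatchingOn (Qc d) (Ms i)) →
      ∀ u v : Fin n × (Fin d → Bool), u.1.val = 0 → v.1.val = n - 1 → gwt u ≠ gwt v →
      (¬ ∃ (k : Fin d) (p : ZMod 2), seqHalfLayer n d k p ⊆ (⋃ i, liftEdges i (Ms i)) ∧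
        coveredBy (seqHalfLayer n d k p) u ∧ coveredBy (seqHalfLayer n d k p) v) →
      ExtendsHamPath (SimpleGraph.pathGraph n □ Qc d) (⋃ i, liftEdges i (Ms i)) u v := by
  intro n hn
  induction n, hn using Nat.le_induction with
  | base =>
    intro Ms hMs u v hu hv hpar hno
    exact backward_base hd hB Ms hMs u v hu (by omega) hpar hno
  | succ n hn IH =>
    intro Ms hMs u v hu hv hpar hno
    exact backward_step hd hB n hn IH Ms hMs u v hu (by omega) hpar hno

end Seq8Dev14
/-- Sequence lemma: in `G = P_m □ Q_d` (`m ≥ 2`, `d ≥ 5`) with a matching `Mᵢ` in each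
canonical copy of `Q_d`, for `u` in the first copy and `v` in the last copy of opposite
global parity, assuming Conjecture B for dimension `d`, a Hamilton path of `G` between `u`
and `v` extending the union of the `Mᵢ` exists iff no sequence of half-layers contained in
that union covers both `u` and `v`. -/
theorem stmt8 (d m : ℕ) (hd : 5 ≤ d) (hm : 2 ≤ m)
    (Ms : Fin m → Set (Sym2 (Fin d → Bool)))
    (hMs : ∀ i, IsMatchingOn (Qc d) (Ms i))
    (u v : Fin m × (Fin d → Bool)) (hu : u.1.val = 0) (hv : v.1.val = m - 1)
    (hpar : gwt u ≠ gwt v) (hB : ConjB d) :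
    ExtendsHamPath (SimpleGraph.pathGraph m □ Qc d) (⋃ i, liftEdges i (Ms i)) u v ↔
      ¬ ∃ (k : Fin d) (p : ZMod 2),
        seqHalfLayer m d k p ⊆ (⋃ i, liftEdges i (Ms i)) ∧
        coveredBy (seqHalfLayer m d k p) u ∧ coveredBy (seqHalfLayer m d k p) v := by
  constructor
  · rintro ⟨p, hham, hext⟩ ⟨k, q, hsub, hcu, hcv⟩
    exact forward_dir hd (⋃ i, liftEdges i (Ms i)) hpar p hham hext hsub hcu hcv
  · intro hno
    exact backward_dir hd hB m hm Ms hMs u v hu hv hpar hno
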